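/- Let G be a group. For n ≥ 0 let C_n = ℚ[G^{n+1}] be the ℚ-vector space with basis G^{n+1}, with boundary ∂ : C_n → C_{n−1} given on basis elements by ∂(g_0,…,g_n) = Σ_{i=0}^{n} (−1)^i (g_0,…,ĝ_i,…,g_n), and let Σ_{n+1} act on C_n by permuting the coordinates of basis elements. Let Alt = (1/(n+1)!) Σ_{σ∈Σ_{n+1}} sgn(σ) σ and let sC_n be the image of Alt (with sC_0 = C_0). Then ∂(sC_n) ⊆ sC_{n−1}, and the augmented complex 0 ← ℚ ←ε sC_0 ←∂ sC_1 ←∂ sC_2 ←∂ ⋯, where ε sends a finite ℚ-linear combination of basis elements to the sum of its coefficients, is exact. -/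

import Mathlib

/-- The boundary `∂ : ℚ[G^{ℓ+1}] → ℚ[G^ℓ]`, given on basis elements by the alternating sum
of coordinate deletions. -/
noncomputable def bdryQ {G : Type*} {ℓ : ℕ}
    (f : (Fin (ℓ + 1) → G) →₀ ℚ) : (Fin ℓ → G) →₀ ℚ :=
  f.sum fun x q => ∑ i : Fin (ℓ + 1), ((-1 : ℚ) ^ (i : ℕ)) •
    Finsupp.single (fun j => x (i.succAbove j)) q

/-- The alternating projector `Alt = (1/ℓ!) Σ_{σ ∈ Σ_ℓ} sgn(σ) σ` on `ℚ[G^ℓ]`, where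
`Σ_ℓ` acts by permuting the coordinates of basis elements. -/
noncomputable def altQ (G : Type*) (ℓ : ℕ) :
    ((Fin ℓ → G) →₀ ℚ) →ₗ[ℚ] ((Fin ℓ → G) →₀ ℚ) :=
  (Nat.factorial ℓ : ℚ)⁻¹ •
    ∑ σ : Equiv.Perm (Fin ℓ),
      (((Equiv.Perm.sign σ : ℤ) : ℚ)) • Finsupp.lmapDomain ℚ ℚ (fun x => x ∘ σ)

/-- The augmentation `ε : ℚ[G^1] → ℚ`, the sum of the coefficients. -/
noncomputable def augQ {G : Type*} (f : (Fin 1 → G) →₀ ℚ) : ℚ :=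
  f.sum fun _ q => q

open Finsupp Equiv

namespace AltRes

variable {G : Type*}

/-- reindexing linear map -/
noncomputable def D {a b : ℕ} (F : Fin a → Fin b) :
    ((Fin b → G) →₀ ℚ) →ₗ[ℚ] ((Fin a → G) →₀ ℚ) :=
  Finsupp.lmapDomain ℚ ℚ (fun x => x ∘ F)

lemma D_single {a b : ℕ} (F : Fin a → Fin b) (x : Fin b → G) (q : ℚ) :
    D F (Finsupp.single x q) = Finsupp.single (x ∘ F) q := Finsupp.mapDomain_single

lemma D_D {a b c : ℕ} (F : Fin a → Fin b) (F' : Fin b → Fin c) (v : (Fin c → G) →₀ ℚ) :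
    D F (D F' v) = D (F' ∘ F) v := by
  simp only [D, lmapDomain_apply]
  rw [← Finsupp.mapDomain_comp]
  congr 1

def sgnQ {m : ℕ} (σ : Perm (Fin m)) : ℚ := ((Equiv.Perm.sign σ : ℤ) : ℚ)

lemma sgnQ_mul {m : ℕ} (σ τ : Perm (Fin m)) : sgnQ (σ * τ) = sgnQ σ * sgnQ τ := by
  simp [sgnQ]

lemma sgnQ_sq {m : ℕ} (σ : Perm (Fin m)) : sgnQ σ * sgnQ σ = 1 := by
  simp [sgnQ, ← Int.cast_mul, Int.units_mul_self]

lemma alt_eq {m : ℕ} (f : (Fin m → G) →₀ ℚ) :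
    altQ G m f = (Nat.factorial m : ℚ)⁻¹ • ∑ σ : Perm (Fin m), sgnQ σ • D (⇑σ) f := by
  simp [altQ, D, sgnQ, LinearMap.sum_apply]

lemma bdryQ_eq {m : ℕ} (f : (Fin (m + 1) → G) →₀ ℚ) :
    bdryQ f = ∑ i : Fin (m + 1), ((-1 : ℚ) ^ (i : ℕ)) • D (Fin.succAbove i) f := by
  rw [bdryQ, Finsupp.sum, Finset.sum_comm]
  refine Finset.sum_congr rfl fun i _ => ?_
  rw [D, lmapDomain_apply, Finsupp.mapDomain, Finsupp.sum, Finset.smul_sum]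
  rfl

lemma sgnQ_inv {m : ℕ} (σ : Perm (Fin m)) : sgnQ σ⁻¹ = sgnQ σ := by
  simp [sgnQ]

def IsAlt {m : ℕ} (v : (Fin m → G) →₀ ℚ) : Prop :=
  ∀ σ : Perm (Fin m), D (⇑σ) v = sgnQ σ • v

lemma isAlt_smul {m : ℕ} {v : (Fin m → G) →₀ ℚ} (hv : IsAlt v) (c : ℚ) :
    IsAlt (c • v) := fun σ => by
  rw [map_smul, hv σ, smul_comm]

lemma alt_isAlt {m : ℕ} (f : (Fin m → G) →₀ ℚ) : IsAlt (altQ G m f) := by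
  intro τ
  rw [alt_eq, map_smul, map_sum, smul_comm (sgnQ τ)]
  congr 1
  have : (∑ σ : Perm (Fin m), D (⇑τ) (sgnQ σ • D (⇑σ) f)) =
      ∑ π : Perm (Fin m), sgnQ (π * τ⁻¹) • D (⇑π) f := by
    refine Fintype.sum_equiv (Equiv.mulRight τ) _ _ fun σ => ?_
    rw [map_smul, D_D]
    have h1 : (⇑σ ∘ ⇑τ) = ⇑(σ * τ) := rfl
    simp only [Equiv.coe_mulRight, mul_inv_cancel_right, h1]
  rw [this, Finset.smul_sum]
  refine Finset.sum_congr rfl fun π _ => ?_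
  rw [smul_smul, sgnQ_mul, sgnQ_inv, mul_comm]

lemma isAlt_alt_eq {m : ℕ} {v : (Fin m → G) →₀ ℚ} (hv : IsAlt v) :
    altQ G m v = v := by
  rw [alt_eq]
  have : (∑ σ : Perm (Fin m), sgnQ σ • D (⇑σ) v) = (Nat.factorial m : ℚ) • v := by
    rw [Finset.sum_congr rfl fun σ _ => by rw [hv σ, smul_smul, sgnQ_sq]]
    rw [Finset.sum_const, Finset.card_univ, Fintype.card_perm]
    simp [Fintype.card_fin, Nat.cast_smul_eq_nsmul]
  rw [this, smul_smul, inv_mul_cancel₀ (by exact_mod_cast Nat.factorial_ne_zero m), one_smul]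

lemma alt_one (f : (Fin 1 → G) →₀ ℚ) : altQ G 1 f = f := by
  refine isAlt_alt_eq fun σ => ?_
  have hσ : σ = 1 := Subsingleton.elim _ _
  subst hσ
  have : sgnQ (1 : Perm (Fin 1)) = 1 := by simp [sgnQ]
  rw [this, one_smul]
  show D id f = f
  show Finsupp.mapDomain _ f = f
  exact Finsupp.mapDomain_id

lemma sgnQ_cycleRange {m : ℕ} (i : Fin (m + 1)) :
    sgnQ (Fin.cycleRange i) = (-1 : ℚ) ^ (i : ℕ) := by
  simp [sgnQ, Fin.sign_cycleRange]

/-- Key chain map property: `∂ ∘ Alt = Alt ∘ ∂`. -/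
lemma bdry_alt (m : ℕ) (f : (Fin (m + 1) → G) →₀ ℚ) :
    bdryQ (altQ G (m + 1) f) = altQ G m (bdryQ f) := by
  set S : (Fin m → G) →₀ ℚ :=
    ∑ π : Perm (Fin (m + 1)), sgnQ π • D (⇑π ∘ Fin.succ) f with hS
  have lhs : bdryQ (altQ G (m + 1) f) =
      ((m + 1).factorial : ℚ)⁻¹ • ∑ i : Fin (m + 1), ∑ σ : Perm (Fin (m + 1)),
        ((-1 : ℚ) ^ (i : ℕ) * sgnQ σ) • D (⇑σ ∘ i.succAbove) f := by
    rw [bdryQ_eq, alt_eq]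
    simp only [map_smul, map_sum, Finset.smul_sum, D_D, smul_smul]
    refine Finset.sum_congr rfl fun i _ => Finset.sum_congr rfl fun σ _ => ?_
    congr 1
    ring
  have claim1 : ∀ i : Fin (m + 1),
      (∑ σ : Perm (Fin (m + 1)), ((-1 : ℚ) ^ (i : ℕ) * sgnQ σ) • D (⇑σ ∘ i.succAbove) f)
        = S := by
    intro i
    refine Fintype.sum_equiv (Equiv.mulRight (Fin.cycleRange i)⁻¹) _ _ fun σ => ?_
    simp only [Equiv.coe_mulRight]
    have hc : ⇑(σ * (Fin.cycleRange i)⁻¹) ∘ Fin.succ = ⇑σ ∘ i.succAbove := by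
      funext j
      simp only [Function.comp_apply, Perm.mul_apply]
      congr 1
      rw [← Fin.cycleRange_succAbove i j, Perm.inv_def, Equiv.symm_apply_apply]
    rw [hc, sgnQ_mul, sgnQ_inv, sgnQ_cycleRange, mul_comm]
  have lhs2 : bdryQ (altQ G (m + 1) f) = ((m + 1).factorial : ℚ)⁻¹ • (m + 1 : ℚ) • S := by
    rw [lhs]
    congr 1
    rw [Finset.sum_congr rfl fun i _ => claim1 i, Finset.sum_const, Finset.card_univ,
      Fintype.card_fin, ← Nat.cast_smul_eq_nsmul ℚ]
    norm_num
  have rhs : altQ G m (bdryQ f) =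
      (m.factorial : ℚ)⁻¹ • ∑ τ : Perm (Fin m), ∑ j : Fin (m + 1),
        (sgnQ τ * (-1 : ℚ) ^ (j : ℕ)) • D (j.succAbove ∘ ⇑τ) f := by
    rw [alt_eq]
    congr 1
    refine Finset.sum_congr rfl fun τ _ => ?_
    rw [bdryQ_eq, map_sum, Finset.smul_sum]
    refine Finset.sum_congr rfl fun j _ => ?_
    rw [map_smul, D_D, smul_smul]
  have claim2 : (∑ τ : Perm (Fin m), ∑ j : Fin (m + 1),
      (sgnQ τ * (-1 : ℚ) ^ (j : ℕ)) • D (j.succAbove ∘ ⇑τ) f) = S := by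
    have hmid : (∑ τ : Perm (Fin m), ∑ j : Fin (m + 1),
        (sgnQ τ * (-1 : ℚ) ^ (j : ℕ)) • D (j.succAbove ∘ ⇑τ) f) =
        ∑ p : Perm (Fin m) × Fin (m + 1),
          (sgnQ p.1 * (-1 : ℚ) ^ ((p.2 : Fin (m+1)) : ℕ)) • D (p.2.succAbove ∘ ⇑p.1) f := by
      rw [Fintype.sum_prod_type]
    rw [hmid]
    set Φ : Perm (Fin m) × Fin (m + 1) → Perm (Fin (m + 1)) := fun p =>
      (Fin.cycleRange p.2)⁻¹ * Equiv.Perm.decomposeFin.symm (0, p.1) with hΦ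
    have hzero : ∀ (τ : Perm (Fin m)) (j : Fin (m + 1)), Φ (τ, j) 0 = j := by
      intro τ j
      simp only [hΦ, Perm.mul_apply, Equiv.Perm.decomposeFin_symm_apply_zero]
      rw [← Fin.cycleRange_self j, Perm.inv_def, Equiv.symm_apply_apply]
    have hsucc : ∀ (τ : Perm (Fin m)) (j : Fin (m + 1)) (k : Fin m),
        Φ (τ, j) k.succ = j.succAbove (τ k) := by
      intro τ j k
      simp only [hΦ, Perm.mul_apply, Equiv.Perm.decomposeFin_symm_apply_succ,
        Equiv.swap_self, Equiv.refl_apply]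
      rw [← Fin.cycleRange_succAbove j (τ k), Perm.inv_def, Equiv.symm_apply_apply]
    have hinj : Function.Injective Φ := by
      intro ⟨τ, j⟩ ⟨τ', j'⟩ h
      have hj : j = j' := by rw [← hzero τ j, ← hzero τ' j', h]
      subst hj
      have : Equiv.Perm.decomposeFin.symm (0, τ) = Equiv.Perm.decomposeFin.symm (0, τ') :=
        mul_left_cancel h
      have := Equiv.Perm.decomposeFin.symm.injective this
      simp only [Prod.mk.injEq] at this
      simp [this.2]
    have hbij : Function.Bijective Φ := by
      rw [Fintype.bijective_iff_injective_and_card]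
      refine ⟨hinj, ?_⟩
      simp [Fintype.card_prod, Fintype.card_perm, Fintype.card_fin, Nat.factorial_succ,
        mul_comm]
    refine Fintype.sum_bijective Φ hbij _ _ fun p => ?_
    obtain ⟨τ, j⟩ := p
    have hfun : ⇑(Φ (τ, j)) ∘ Fin.succ = j.succAbove ∘ ⇑τ := by
      funext k
      exact hsucc τ j k
    have hsgn : sgnQ (Φ (τ, j)) = sgnQ τ * (-1 : ℚ) ^ (j : ℕ) := by
      rw [hΦ]
      simp only [sgnQ_mul, sgnQ_inv, sgnQ_cycleRange]
      have : sgnQ (Equiv.Perm.decomposeFin.symm (0, τ)) = sgnQ τ := by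
        simp [sgnQ, Equiv.Perm.decomposeFin.symm_sign]
      rw [this, mul_comm]
    rw [hfun, hsgn]
  rw [lhs2, rhs, claim2, hS, smul_smul]
  congr 1
  rw [Nat.factorial_succ]
  have h1 : ((m + 1 : ℕ) : ℚ) ≠ 0 := by positivity
  have h2 : ((m.factorial : ℕ) : ℚ) ≠ 0 := by exact_mod_cast Nat.factorial_ne_zero m
  field_simp
  push_cast
  ring

/-- The boundary as a linear map. -/
noncomputable def bdryL (m : ℕ) :
    ((Fin (m + 1) → G) →₀ ℚ) →ₗ[ℚ] ((Fin m → G) →₀ ℚ) :=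
  ∑ i : Fin (m + 1), ((-1 : ℚ) ^ (i : ℕ)) • D (Fin.succAbove i)

lemma bdryL_eq {m : ℕ} (f : (Fin (m + 1) → G) →₀ ℚ) : bdryQ f = bdryL m f := by
  rw [bdryQ_eq]
  simp [bdryL, LinearMap.sum_apply]

lemma bdryL_single {m : ℕ} (x : Fin (m + 1) → G) (q : ℚ) :
    bdryL m (Finsupp.single x q) =
      ∑ i : Fin (m + 1), ((-1 : ℚ) ^ (i : ℕ)) • Finsupp.single (x ∘ i.succAbove) q := by
  simp [bdryL, LinearMap.sum_apply, D_single]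

lemma bdry_of_isAlt {m : ℕ} {w : (Fin (m + 1) → G) →₀ ℚ} (hw : IsAlt w) :
    bdryL m w = ((m : ℚ) + 1) • D Fin.succ w := by
  have hterm : ∀ i : Fin (m + 1),
      D (Fin.succAbove i) w = ((-1 : ℚ) ^ (i : ℕ)) • D Fin.succ w := by
    intro i
    have hfun : (Fin.succAbove i : Fin m → Fin (m + 1)) =
        ⇑(Fin.cycleRange i)⁻¹ ∘ Fin.succ := by
      funext j
      simp only [Function.comp_apply]
      rw [← Fin.cycleRange_succAbove i j, Perm.inv_def, Equiv.symm_apply_apply]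
    rw [hfun, ← D_D, hw, map_smul, sgnQ_inv, sgnQ_cycleRange]
  have : bdryL m w = ∑ i : Fin (m + 1),
      ((-1 : ℚ) ^ (i : ℕ)) • (((-1 : ℚ) ^ (i : ℕ)) • D Fin.succ w) := by
    rw [bdryL, LinearMap.sum_apply]
    exact Finset.sum_congr rfl fun i _ => by rw [LinearMap.smul_apply, hterm i]
  rw [this]
  have : ∀ i : Fin (m + 1), ((-1 : ℚ) ^ (i : ℕ)) • (((-1 : ℚ) ^ (i : ℕ)) • D Fin.succ w)
      = D Fin.succ w := by
    intro i
    rw [smul_smul, ← mul_pow]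
    norm_num
  rw [Finset.sum_congr rfl fun i _ => this i, Finset.sum_const, Finset.card_univ,
    Fintype.card_fin, ← Nat.cast_smul_eq_nsmul ℚ]
  norm_num

lemma D_succ_succ_isAlt {m : ℕ} {w : (Fin (m + 2) → G) →₀ ℚ} (hw : IsAlt w) :
    D (Fin.succ : Fin m → Fin (m + 1)) (D (Fin.succ : Fin (m + 1) → Fin (m + 2)) w) = 0 := by
  rw [D_D]
  set X := D (Fin.succ ∘ (Fin.succ : Fin m → Fin (m + 1))) w with hX
  have h01 : (0 : Fin (m + 2)) ≠ 1 := by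
    intro h
    exact absurd (congrArg Fin.val h) (by norm_num)
  have hkey : ⇑(Equiv.swap (0 : Fin (m + 2)) 1) ∘
      (Fin.succ ∘ (Fin.succ : Fin m → Fin (m + 1))) =
      Fin.succ ∘ (Fin.succ : Fin m → Fin (m + 1)) := by
    funext j
    simp only [Function.comp_apply]
    refine Equiv.swap_apply_of_ne_of_ne (Fin.succ_ne_zero _) ?_
    intro h
    rw [← Fin.succ_zero_eq_one] at h
    exact Fin.succ_ne_zero _ (Fin.succ_injective _ h)
  have hswap : sgnQ (Equiv.swap (0 : Fin (m + 2)) 1) = -1 := by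
    simp [sgnQ, Equiv.Perm.sign_swap h01]
  have hneg : X = -X := by
    conv_lhs => rw [hX, ← hkey, ← D_D, hw, hswap]
    simp
    exact hX.symm
  have h2 : (2 : ℚ) • X = 0 := by
    rw [two_smul]
    nth_rewrite 1 [hneg]
    exact neg_add_cancel X
  have := (smul_eq_zero.mp h2).resolve_left (by norm_num)
  exact this

variable [One G]

/-- The contracting homotopy: prepend the identity element. -/
noncomputable def hmap {m : ℕ} :
    ((Fin m → G) →₀ ℚ) →ₗ[ℚ] ((Fin (m + 1) → G) →₀ ℚ) :=
  Finsupp.lmapDomain ℚ ℚ (fun x : Fin m → G => Fin.cons 1 x)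

lemma hmap_single {m : ℕ} (x : Fin m → G) (q : ℚ) :
    hmap (Finsupp.single x q) = Finsupp.single (Fin.cons 1 x) q :=
  Finsupp.mapDomain_single

lemma cons_comp_succAbove_succ {m : ℕ} (x : Fin (m + 1) → G) (j : Fin (m + 1)) :
    (Fin.cons 1 x : Fin (m + 2) → G) ∘ (j.succ).succAbove = Fin.cons 1 (x ∘ j.succAbove) := by
  funext k
  refine Fin.cases ?_ (fun l => ?_) k
  · simp [Fin.succ_succAbove_zero]
  · simp [Fin.succ_succAbove_succ]

lemma homotopy (m : ℕ) (f : (Fin (m + 2) → G) →₀ ℚ) :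
    bdryL (m + 2) (hmap f) + hmap (bdryL (m + 1) f) = f := by
  induction f using Finsupp.induction_linear with
  | zero => simp
  | add f g hf hg =>
    simp only [map_add]
    rw [add_add_add_comm, hf, hg]
  | single x q =>
    rw [hmap_single, bdryL_single, bdryL_single, map_sum, Fin.sum_univ_succ]
    have h0 : (Fin.cons 1 x : Fin (m + 3) → G) ∘ (0 : Fin (m + 3)).succAbove = x := by
      funext j
      simp [Fin.succAbove_zero]
    rw [h0]
    simp only [Fin.val_zero, pow_zero, one_smul, map_smul, hmap_single]
    have hcomp : ∀ j : Fin (m + 2),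
        ((-1 : ℚ) ^ ((j.succ : Fin (m + 3)) : ℕ)) •
          Finsupp.single ((Fin.cons 1 x : Fin (m + 3) → G) ∘ (j.succ).succAbove) q =
        -(((-1 : ℚ) ^ (j : ℕ)) • Finsupp.single (Fin.cons 1 (x ∘ j.succAbove) :
            Fin (m + 2) → G) q) := by
      intro j
      rw [cons_comp_succAbove_succ, Fin.val_succ, pow_succ]
      rw [mul_neg_one, neg_smul]
    rw [Finset.sum_congr rfl fun j _ => hcomp j]
    rw [add_assoc, ← Finset.sum_add_distrib]
    simp

lemma aug_eq (f : (Fin 1 → G) →₀ ℚ) :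
    augQ f = Finsupp.lsum ℚ (fun _ : Fin 1 → G => LinearMap.id (R := ℚ) (M := ℚ)) f := by
  simp [augQ, Finsupp.lsum]
  rfl

lemma aug_single (x : Fin 1 → G) (q : ℚ) : augQ (Finsupp.single x q) = q := by
  rw [augQ]
  exact Finsupp.sum_single_index rfl

lemma aug_add (f g : (Fin 1 → G) →₀ ℚ) : augQ (f + g) = augQ f + augQ g := by
  rw [aug_eq, aug_eq, aug_eq, map_add]

lemma homotopy_zero (f : (Fin 1 → G) →₀ ℚ) :
    bdryL 1 (hmap f) = f - augQ f • Finsupp.single (fun _ => (1 : G)) 1 := by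
  induction f using Finsupp.induction_linear with
  | zero => simp [augQ]
  | add f g hf hg =>
    rw [map_add, map_add, hf, hg, aug_add, add_smul]
    abel
  | single x q =>
    rw [hmap_single, bdryL_single, Fin.sum_univ_two, aug_single]
    have h0 : (Fin.cons 1 x : Fin 2 → G) ∘ (0 : Fin 2).succAbove = x := by
      funext j
      simp [Fin.succAbove_zero]
    have h1 : (Fin.cons 1 x : Fin 2 → G) ∘ (1 : Fin 2).succAbove = fun _ => (1 : G) := by
      funext j
      have hj : j = 0 := Subsingleton.elim _ _
      subst hj
      have : (1 : Fin 2).succAbove 0 = 0 := rfl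
      rw [Function.comp_apply, this, Fin.cons_zero]
    rw [h0, h1]
    simp [Finsupp.smul_single, sub_eq_add_neg]

lemma aug_bdry (g : (Fin 2 → G) →₀ ℚ) : augQ (bdryL 1 g) = 0 := by
  induction g using Finsupp.induction_linear with
  | zero => simp [augQ]
  | add f g hf hg => rw [map_add, aug_add, hf, hg, add_zero]
  | single x q =>
    rw [bdryL_single, Fin.sum_univ_two, aug_add]
    have hs : ∀ (y : Fin 1 → G) (c : ℚ), augQ (c • Finsupp.single y q) = c * q := by
      intro y c
      rw [Finsupp.smul_single, aug_single]
      exact rfl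
    rw [hs, hs]
    simp

end AltRes

open AltRes

/-- For a group `G`, the boundary of the standard resolution preserves the alternating part
`sC_• = im(Alt)`, and the augmented complex `0 ← ℚ ← sC_0 ← sC_1 ← sC_2 ← ⋯` of
alternating parts is exact. -/
theorem alternating_part_of_standard_resolution_exact (G : Type*) [Group G] :
    -- ∂ preserves the alternating part
    (∀ (ℓ : ℕ) (f : (Fin (ℓ + 2) → G) →₀ ℚ),
      ∃ g : (Fin (ℓ + 1) → G) →₀ ℚ, bdryQ (altQ G (ℓ + 2) f) = altQ G (ℓ + 1) g) ∧
    -- the augmentation is surjective on sC_0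
    (∀ q : ℚ, ∃ f : (Fin 1 → G) →₀ ℚ, augQ (altQ G 1 f) = q) ∧
    -- exactness at sC_0
    (∀ f : (Fin 1 → G) →₀ ℚ,
      augQ (altQ G 1 f) = 0 ↔
        ∃ g : (Fin 2 → G) →₀ ℚ, bdryQ (altQ G 2 g) = altQ G 1 f) ∧
    -- exactness at sC_n for n ≥ 1
    (∀ (ℓ : ℕ) (f : (Fin (ℓ + 2) → G) →₀ ℚ),
      bdryQ (altQ G (ℓ + 2) f) = 0 ↔
        ∃ g : (Fin (ℓ + 3) → G) →₀ ℚ, bdryQ (altQ G (ℓ + 3) g) = altQ G (ℓ + 2) f) := by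
  refine ⟨fun ℓ f => ⟨bdryQ f, bdry_alt (ℓ + 1) f⟩,
    fun q => ⟨Finsupp.single (fun _ => 1) q, by rw [alt_one, aug_single]⟩, fun f => ?_,
    fun ℓ f => ?_⟩
  · rw [alt_one]
    constructor
    · intro h
      refine ⟨hmap f, ?_⟩
      rw [bdry_alt 1, alt_one, bdryL_eq, homotopy_zero, h, zero_smul, sub_zero]
    · rintro ⟨g, hg⟩
      rw [← hg, bdryL_eq]
      exact aug_bdry _
  · constructor
    · intro h
      refine ⟨hmap (altQ G (ℓ + 2) f), ?_⟩
      rw [bdry_alt (ℓ + 2)]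
      have hh := homotopy ℓ (altQ G (ℓ + 2) f)
      rw [bdryL_eq] at h
      rw [h, map_zero, add_zero] at hh
      rw [bdryL_eq, hh]
      exact isAlt_alt_eq (alt_isAlt f)
    · rintro ⟨g, hg⟩
      have hw : IsAlt (altQ G (ℓ + 3) g) := alt_isAlt g
      have h1 : altQ G (ℓ + 2) f = ((ℓ : ℚ) + 2 + 1) • D Fin.succ (altQ G (ℓ + 3) g) := by
        rw [← hg, bdryL_eq, bdry_of_isAlt hw]
        norm_num
      rw [bdryL_eq, bdry_of_isAlt (alt_isAlt f), h1, map_smul,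
        D_succ_succ_isAlt hw, smul_zero, smul_zero]
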